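/- Let k be a field of prime characteristic p, let A = k[x₁,…,xₙ]/(x₁²,…,xₙ²), and let ℓ = x₁ + ⋯ + xₙ. For any integers i ≥ 0 and t ≥ 1, the multiplication map ·ℓ^t : A_i → A_{i+t} has full rank if and only if i + t > n or p > min{i+t, n−i}. -/

import Mathlib

set_option maxHeartbeats 1000000
set_option synthInstance.maxHeartbeats 400000


/-- Multiplication by `a` is injective as a map on the subspace `V`. -/
def MulInjOn {k R : Type*} [Field k] [CommRing R] [Algebra k R]
    (V : Submodule k R) (a : R) : Prop :=
  ∀ v ∈ V, a * v = 0 → v = 0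

/-- Multiplication by `a` maps the subspace `V` onto the subspace `W`. -/
def MulSurjOnto {k R : Type*} [Field k] [CommRing R] [Algebra k R]
    (V W : Submodule k R) (a : R) : Prop :=
  ∀ w ∈ W, ∃ v ∈ V, a * v = w

/-- The multiplication map `·a : V → W` has full rank: it is injective or surjective. -/
def MulFullRank {k R : Type*} [Field k] [CommRing R] [Algebra k R]
    (V W : Submodule k R) (a : R) : Prop :=
  MulInjOn V a ∨ MulSurjOnto V W a

/-- The ideal `(x₁², …, xₙ²)` of the polynomial ring. -/
noncomputable def sqIdeal (k : Type) [Field k] (n : ℕ) : Ideal (MvPolynomial (Fin n) k) :=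
  Ideal.span { f : MvPolynomial (Fin n) k | ∃ j : Fin n, f = MvPolynomial.X j ^ 2 }

/-- The degree-`i` component of `A = k[x₁,…,xₙ]/(x₁²,…,xₙ²)`, i.e. the image of the
degree-`i` homogeneous polynomials. -/
noncomputable def sqComp (k : Type) [Field k] (n i : ℕ) :
    Submodule k (MvPolynomial (Fin n) k ⧸ sqIdeal k n) :=
  Submodule.map (Ideal.Quotient.mkₐ k (sqIdeal k n)).toLinearMap
    (MvPolynomial.homogeneousSubmodule (Fin n) k i)

/-- The linear form `ℓ = x₁ + ⋯ + xₙ` in `k[x₁,…,xₙ]/(x₁²,…,xₙ²)`. -/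
noncomputable def sqSumVars (k : Type) [Field k] (n : ℕ) :
    MvPolynomial (Fin n) k ⧸ sqIdeal k n :=
  Ideal.Quotient.mkₐ k (sqIdeal k n) (∑ j : Fin n, MvPolynomial.X j)

noncomputable section
namespace SF
open MvPolynomial Finset

variable {k : Type} [Field k] {n : ℕ}

abbrev A (k : Type) [Field k] (n : ℕ) := MvPolynomial (Fin n) k ⧸ sqIdeal k n

def mk0 : MvPolynomial (Fin n) k →ₐ[k] A k n := Ideal.Quotient.mkₐ k (sqIdeal k n)

def m (S : Finset (Fin n)) : A k n := mk0 (∏ j ∈ S, X j)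

def xv (j : Fin n) : A k n := (mk0 (X j) : A k n)

def lf (U : Finset (Fin n)) : A k n := ∑ j ∈ U, xv j

def P (k : Type) [Field k] {n : ℕ} (U : Finset (Fin n)) (i : ℕ) : Submodule k (A k n) :=
  Submodule.span k (m '' {S : Finset (Fin n) | S ⊆ U ∧ S.card = i})

lemma sqIdeal_eq_range : sqIdeal k n
    = Ideal.span (Set.range fun j : Fin n => (X j : MvPolynomial (Fin n) k) ^ 2) := by
  unfold sqIdeal
  congr 1
  ext f
  simp [Set.range, eq_comm]

lemma sq_mem_sqIdeal (j : Fin n) : (X j : MvPolynomial (Fin n) k) ^ 2 ∈ sqIdeal k n :=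
  Ideal.subset_span ⟨j, rfl⟩

/-- exponent vector of a squarefree monomial -/
def e (S : Finset (Fin n)) : Fin n →₀ ℕ := ∑ j ∈ S, Finsupp.single j 1

lemma e_apply (S : Finset (Fin n)) (x : Fin n) : e S x = if x ∈ S then 1 else 0 := by
  classical
  rw [e, Finset.sum_apply']
  simp [Finsupp.single_apply]

lemma prod_X_eq_monomial (S : Finset (Fin n)) :
    (∏ j ∈ S, X j : MvPolynomial (Fin n) k) = monomial (e S) 1 := by
  classical
  have hs : (e S : Fin n →₀ ℕ).support = S := by
    ext x
    simp [Finsupp.mem_support_iff, e_apply]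
  rw [← prod_X_pow_eq_monomial, hs]
  apply Finset.prod_congr rfl
  intro x hx
  rw [e_apply, if_pos hx, pow_one]

lemma coeff_mul_sq (r : MvPolynomial (Fin n) k) (j : Fin n) (S : Finset (Fin n)) :
    coeff (e S) (r * X j ^ 2) = 0 := by
  classical
  have : r * X j ^ 2 = r * X j * X j := by ring
  rw [this, coeff_mul_X']
  split_ifs with h
  · rw [coeff_mul_X']
    rw [if_neg]
    intro hc
    rw [Finsupp.mem_support_iff, Finsupp.tsub_apply, Finsupp.single_eq_same] at hc
    have := e_apply S j
    apply hc
    split_ifs at this <;> omega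
  · rfl

lemma coeff_e_eq_zero_of_mem_sqIdeal {f : MvPolynomial (Fin n) k}
    (hf : f ∈ sqIdeal k n) (S : Finset (Fin n)) : coeff (e S) f = 0 := by
  classical
  rw [sqIdeal_eq_range, Finsupp.mem_ideal_span_range_iff_exists_finsupp] at hf
  obtain ⟨c, rfl⟩ := hf
  rw [Finsupp.sum, coeff_sum]
  exact Finset.sum_eq_zero fun j _ => coeff_mul_sq _ _ _

lemma m_ne_zero (S : Finset (Fin n)) : (m S : A k n) ≠ 0 := by
  intro h
  rw [m, mk0, Ideal.Quotient.mkₐ_eq_mk, Ideal.Quotient.eq_zero_iff_mem] at h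
  have := coeff_e_eq_zero_of_mem_sqIdeal h S
  rw [prod_X_eq_monomial, coeff_monomial, if_pos rfl] at this
  exact one_ne_zero this

lemma m_mul_m_of_disjoint {S T : Finset (Fin n)} (h : Disjoint S T) :
    (m S : A k n) * m T = m (S ∪ T) := by
  rw [m, m, m, ← map_mul, ← Finset.prod_union h]

lemma m_mul_m_of_not_disjoint {S T : Finset (Fin n)} (h : ¬ Disjoint S T) :
    (m S : A k n) * m T = 0 := by
  classical
  obtain ⟨j, hjS, hjT⟩ : ∃ j, j ∈ S ∧ j ∈ T := by
    rw [Finset.not_disjoint_iff] at h; exact h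
  rw [m, m, ← map_mul]
  have : (∏ j ∈ S, X j : MvPolynomial (Fin n) k) * ∏ j ∈ T, X j
      = X j ^ 2 * ((∏ i ∈ S.erase j, X i) * ∏ i ∈ T.erase j, X i) := by
    rw [← Finset.prod_erase_mul S _ hjS, ← Finset.prod_erase_mul T _ hjT]; ring
  rw [this, mk0, Ideal.Quotient.mkₐ_eq_mk, Ideal.Quotient.eq_zero_iff_mem]
  exact Ideal.mul_mem_right _ _ (sq_mem_sqIdeal j)

lemma m_empty : (m ∅ : A k n) = 1 := by simp [m]

lemma xv_mul_m_of_not_mem {j : Fin n} {S : Finset (Fin n)} (h : j ∉ S) :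
    (xv j : A k n) * m S = m (insert j S) := by
  have : (xv j : A k n) = m {j} := by simp [m, xv]
  rw [this, m_mul_m_of_disjoint (by simpa using h), ← Finset.insert_eq]

lemma xv_mul_m_of_mem {j : Fin n} {S : Finset (Fin n)} (h : j ∈ S) :
    (xv j : A k n) * m S = 0 := by
  have : (xv j : A k n) = m {j} := by simp [m, xv]
  rw [this, m_mul_m_of_not_disjoint (by simp [Finset.disjoint_left, h])]

end SF

namespace SF2
open MvPolynomial Finset SF

variable {k : Type} [Field k] {n : ℕ}

lemma m_mem_P {S U : Finset (Fin n)} {i : ℕ} (hS : S ⊆ U) (hc : S.card = i) :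
    m S ∈ P k U i :=
  Submodule.subset_span ⟨S, ⟨hS, hc⟩, rfl⟩

lemma P_mono_left {U V : Finset (Fin n)} {i : ℕ} (h : U ⊆ V) :
    P k U i ≤ P k V i := by
  apply Submodule.span_mono
  rintro x ⟨S, ⟨hS, hc⟩, rfl⟩
  exact ⟨S, ⟨hS.trans h, hc⟩, rfl⟩

lemma P_eq_bot {U : Finset (Fin n)} {i : ℕ} (h : U.card < i) :
    P k U i = (⊥ : Submodule k (A k n)) := by
  rw [P]
  convert Submodule.span_empty
  rw [Set.image_eq_empty]
  ext S
  simp only [Set.mem_setOf_eq, Set.mem_empty_iff_false, iff_false, not_and]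
  intro hS hc
  exact absurd (Finset.card_le_card hS) (by omega)

/-- master linear-independence lemma via multiplication tests -/
lemma eq_zero_of_tests {U : Finset (Fin n)} {c : ℕ} {x : A k n} (hx : x ∈ P k U c)
    (h : ∀ S, S ⊆ U → S.card = c → x * m Sᶜ = 0) : x = 0 := by
  classical
  rw [P, Finsupp.mem_span_image_iff_linearCombination] at hx
  obtain ⟨l, hl, rfl⟩ := hx
  have hl0 : l = 0 := by
    ext S
    by_cases hS : S ∈ l.support
    · have hmem := hl hS
      simp only [Set.mem_setOf_eq] at hmem
      have htest := h S hmem.1 hmem.2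
      rw [Finsupp.linearCombination_apply, Finsupp.sum_mul] at htest
      rw [Finsupp.sum_eq_single S (fun T hT hTS => ?_) (by simp)] at htest
      · rw [smul_mul_assoc, m_mul_m_of_disjoint (disjoint_compl_right),
          Finset.union_compl] at htest
        rcases smul_eq_zero.mp htest with h1 | h2
        · exact h1
        · exact absurd h2 (m_ne_zero _)
      · have hmemT := hl (Finsupp.mem_support_iff.mpr hT)
        simp only [Set.mem_setOf_eq] at hmemT
        rw [smul_mul_assoc, m_mul_m_of_not_disjoint, smul_zero]
        intro hdisj
        apply hTS
        apply Finset.eq_of_subset_of_card_le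
        · intro x hxT
          by_contra hxS
          exact (Finset.disjoint_left.mp hdisj hxT) (Finset.mem_compl.mpr hxS)
        · rw [hmem.2, hmemT.2]
    · simpa using hS
  rw [hl0, map_zero]

lemma direct {U' : Finset (Fin n)} {a : Fin n} (ha : a ∉ U') {c c' : ℕ} {x y : A k n}
    (hx : x ∈ P k U' c) (hy : y ∈ P k U' c') (h : x + xv a * y = 0) : x = 0 ∧ y = 0 := by
  have hx0 : x = 0 := by
    apply eq_zero_of_tests hx
    intro S hS hc
    have haS : a ∈ Sᶜ := Finset.mem_compl.mpr fun hmem => ha (hS hmem)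
    have hxa : (xv a : A k n) * m Sᶜ = 0 := xv_mul_m_of_mem haS
    have heq : x * m Sᶜ = (x + xv a * y) * m Sᶜ - y * (xv a * m Sᶜ) := by ring
    rw [heq, h, hxa, zero_mul, mul_zero, sub_zero]
  refine ⟨hx0, ?_⟩
  rw [hx0, zero_add] at h
  apply eq_zero_of_tests hy
  intro S hS hc
  have haS : a ∈ Sᶜ := Finset.mem_compl.mpr fun hmem => ha (hS hmem)
  have hrw : (m Sᶜ : A k n) = xv a * m (Sᶜ.erase a) := by
    rw [xv_mul_m_of_not_mem (Finset.notMem_erase a Sᶜ), Finset.insert_erase haS]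
  rw [hrw, ← mul_assoc, mul_comm y (xv a), h, zero_mul]

lemma decomp {U' : Finset (Fin n)} {a : Fin n} (ha : a ∉ U') {i : ℕ} {v : A k n}
    (hv : v ∈ P k (insert a U') i) :
    ∃ f g : A k n, f ∈ P k U' i ∧ g ∈ P k U' (i - 1) ∧ v = f + xv a * g ∧ (i = 0 → g = 0) := by
  classical
  induction hv using Submodule.span_induction with
  | mem x hx =>
    obtain ⟨S, ⟨hS, hc⟩, rfl⟩ := hx
    by_cases haS : a ∈ S
    · refine ⟨0, m (S.erase a), Submodule.zero_mem _, m_mem_P ?_ ?_, ?_, ?_⟩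
      · intro x hx
        have := hS (Finset.mem_of_mem_erase hx)
        rcases Finset.mem_insert.mp this with h1 | h2
        · exact absurd h1 (Finset.ne_of_mem_erase hx)
        · exact h2
      · rw [Finset.card_erase_of_mem haS, hc]
      · rw [zero_add, xv_mul_m_of_not_mem (Finset.notMem_erase a S),
          Finset.insert_erase haS]
      · intro hi; exfalso; rw [hi] at hc
        exact absurd hc (Finset.card_ne_zero_of_mem haS)
    · refine ⟨m S, 0, m_mem_P (fun x hx => ?_) hc, Submodule.zero_mem _, by ring, fun _ => rfl⟩
      rcases Finset.mem_insert.mp (hS hx) with h1 | h2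
      · exact absurd (h1 ▸ hx) haS
      · exact h2
  | zero => exact ⟨0, 0, Submodule.zero_mem _, Submodule.zero_mem _, by ring, fun _ => rfl⟩
  | add x y hx hy ihx ihy =>
    obtain ⟨f1, g1, hf1, hg1, he1, hz1⟩ := ihx
    obtain ⟨f2, g2, hf2, hg2, he2, hz2⟩ := ihy
    exact ⟨f1 + f2, g1 + g2, Submodule.add_mem _ hf1 hf2, Submodule.add_mem _ hg1 hg2,
      by rw [he1, he2]; ring, fun hi => by rw [hz1 hi, hz2 hi, add_zero]⟩
  | smul c x hx ihx =>
    obtain ⟨f1, g1, hf1, hg1, he1, hz1⟩ := ihx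
    exact ⟨c • f1, c • g1, Submodule.smul_mem _ _ hf1, Submodule.smul_mem _ _ hg1,
      by rw [he1]; rw [smul_add, mul_smul_comm], fun hi => by rw [hz1 hi, smul_zero]⟩

end SF2

namespace SF3
open MvPolynomial Finset SF SF2

variable {k : Type} [Field k] {n : ℕ}

lemma lf_insert {a : Fin n} {U' : Finset (Fin n)} (ha : a ∉ U') :
    (lf (insert a U') : A k n) = lf U' + xv a := by
  rw [lf, Finset.sum_insert ha, add_comm, lf]

lemma lf_mul_m {U S : Finset (Fin n)} (hS : S ⊆ U) :
    (lf U : A k n) * m S = ∑ j ∈ U \ S, m (insert j S) := by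
  classical
  rw [lf, Finset.sum_mul, ← Finset.sum_sdiff hS]
  have h2 : ∑ j ∈ S, (xv j : A k n) * m S = 0 :=
    Finset.sum_eq_zero fun j hj => xv_mul_m_of_mem hj
  rw [h2, add_zero]
  exact Finset.sum_congr rfl fun j hj =>
    xv_mul_m_of_not_mem (Finset.mem_sdiff.mp hj).2

lemma lf_mul_mem_P {U : Finset (Fin n)} {i : ℕ} {v : A k n} (hv : v ∈ P k U i) :
    lf U * v ∈ P k U (i + 1) := by
  classical
  induction hv using Submodule.span_induction with
  | mem x hx =>
    obtain ⟨S, ⟨hS, hc⟩, rfl⟩ := hx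
    rw [lf_mul_m hS]
    apply Submodule.sum_mem
    intro j hj
    rw [Finset.mem_sdiff] at hj
    exact m_mem_P (Finset.insert_subset hj.1 hS)
      (by rw [Finset.card_insert_of_notMem hj.2, hc])
  | zero => rw [mul_zero]; exact Submodule.zero_mem _
  | add x y _ _ ihx ihy => rw [mul_add]; exact Submodule.add_mem _ ihx ihy
  | smul c x _ ihx => rw [mul_smul_comm]; exact Submodule.smul_mem _ _ ihx

lemma lf_pow_mul_mem_P (t : ℕ) {U : Finset (Fin n)} {i : ℕ} {v : A k n} (hv : v ∈ P k U i) :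
    lf U ^ t * v ∈ P k U (i + t) := by
  induction t with
  | zero => rw [pow_zero, one_mul]; exact hv
  | succ t ih =>
    have : (lf U : A k n) ^ (t+1) * v = lf U * (lf U ^ t * v) := by ring
    rw [this]
    have := lf_mul_mem_P ih
    rwa [show i + t + 1 = i + (t+1) by omega] at this

lemma sq_xv (j : Fin n) : (xv j : A k n) * xv j = 0 := by
  rw [xv, ← map_mul, mk0, Ideal.Quotient.mkₐ_eq_mk, Ideal.Quotient.eq_zero_iff_mem,
    ← pow_two]
  exact sq_mem_sqIdeal j

lemma pow_split {R : Type*} [CommRing R] {x : R} (hx : x * x = 0) (y : R) (t : ℕ) :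
    (y + x) ^ (t + 1) = y ^ (t + 1) + ((t + 1 : ℕ) : R) * (x * y ^ t) := by
  induction t with
  | zero => push_cast; ring
  | succ t ih =>
    rw [pow_succ, ih]
    push_cast
    linear_combination (((t:R) + 1) * y ^ t) * hx

lemma sum_insert_powersetCard {α M : Type*} [DecidableEq α] [AddCommMonoid M]
    (V : Finset α) (r : ℕ) (F : Finset α → M) :
    ∑ T ∈ Finset.powersetCard r V, ∑ j ∈ V \ T, F (insert j T)
      = (r + 1) • ∑ T ∈ Finset.powersetCard (r + 1) V, F T := by
  classical
  have key : ∑ T ∈ Finset.powersetCard r V, ∑ j ∈ V \ T, F (insert j T)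
      = ∑ T ∈ Finset.powersetCard (r + 1) V, ∑ j ∈ T, F T := by
    rw [Finset.sum_sigma', Finset.sum_sigma']
    refine Finset.sum_bij'
      (fun (a : (_ : Finset α) × α) (_ : a ∈ (Finset.powersetCard r V).sigma fun T => V \ T)
        => (⟨insert a.2 a.1, a.2⟩ : (_ : Finset α) × α))
      (fun (b : (_ : Finset α) × α) (_ : b ∈ (Finset.powersetCard (r+1) V).sigma fun T => T)
        => (⟨b.1.erase b.2, b.2⟩ : (_ : Finset α) × α)) ?_ ?_ ?_ ?_ ?_
    · rintro ⟨T, j⟩ ha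
      rw [Finset.mem_sigma, Finset.mem_powersetCard] at ha
      obtain ⟨⟨hTV, hTc⟩, hj⟩ := ha
      rw [Finset.mem_sdiff] at hj
      rw [Finset.mem_sigma, Finset.mem_powersetCard]
      refine ⟨⟨Finset.insert_subset hj.1 hTV, ?_⟩, Finset.mem_insert_self _ _⟩
      rw [Finset.card_insert_of_notMem hj.2, hTc]
    · rintro ⟨T, j⟩ hb
      rw [Finset.mem_sigma, Finset.mem_powersetCard] at hb
      obtain ⟨⟨hTV, hTc⟩, hj⟩ := hb
      rw [Finset.mem_sigma, Finset.mem_powersetCard, Finset.mem_sdiff]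
      refine ⟨⟨(Finset.erase_subset _ _).trans hTV, ?_⟩, hTV hj, Finset.notMem_erase _ _⟩
      rw [Finset.card_erase_of_mem hj, hTc]
      omega
    · rintro ⟨T, j⟩ ha
      rw [Finset.mem_sigma] at ha
      have hj : j ∉ T := (Finset.mem_sdiff.mp ha.2).2
      simp only [Finset.erase_insert_eq_erase, Finset.erase_eq_of_notMem hj]
    · rintro ⟨T, j⟩ hb
      rw [Finset.mem_sigma] at hb
      simp only [Finset.insert_erase hb.2]
    · rintro ⟨T, j⟩ _
      rfl
  rw [key]
  have h2 : ∑ T ∈ Finset.powersetCard (r + 1) V, ∑ _j ∈ T, F T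
      = ∑ T ∈ Finset.powersetCard (r + 1) V, (r + 1) • F T := by
    apply Finset.sum_congr rfl
    intro T hT
    rw [Finset.sum_const, (Finset.mem_powersetCard.mp hT).2]
  rw [h2, ← Finset.smul_sum]

end SF3

namespace SF4
open MvPolynomial Finset SF SF2 SF3

variable {k : Type} [Field k] {n : ℕ}

lemma lf_pow_mul_m {U S : Finset (Fin n)} (hS : S ⊆ U) (r : ℕ) :
    (lf U : A k n) ^ r * m S
      = (Nat.factorial r) • ∑ T ∈ Finset.powersetCard r (U \ S), m (S ∪ T) := by
  classical
  induction r with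
  | zero => simp
  | succ r ih =>
    have hstep : (lf U : A k n) ^ (r+1) * m S = lf U * (lf U ^ r * m S) := by ring
    rw [hstep, ih, mul_smul_comm, Finset.mul_sum]
    have hterm : ∀ T ∈ Finset.powersetCard r (U \ S),
        (lf U : A k n) * m (S ∪ T) = ∑ j ∈ (U \ S) \ T, m (S ∪ insert j T) := by
      intro T hT
      rw [Finset.mem_powersetCard] at hT
      have hsub : S ∪ T ⊆ U :=
        Finset.union_subset hS (hT.1.trans (Finset.sdiff_subset))
      rw [lf_mul_m hsub]
      have hidx : U \ (S ∪ T) = (U \ S) \ T := by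
        ext x; simp only [Finset.mem_sdiff, Finset.mem_union]; tauto
      rw [hidx]
      apply Finset.sum_congr rfl
      intro j hj
      congr 1
      ext x; simp only [Finset.mem_insert, Finset.mem_union]; tauto
    rw [Finset.sum_congr rfl hterm,
      sum_insert_powersetCard (U \ S) r (fun T' => m (S ∪ T')), smul_smul,
      Nat.factorial_succ, Nat.mul_comm (r+1) r.factorial]

lemma lf_univ_eq : (lf Finset.univ : A k n) = sqSumVars k n := by
  rw [sqSumVars, map_sum, lf]
  rfl

lemma lf_pow_p {p : ℕ} (hp : p.Prime) [CharP k p] :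
    (lf Finset.univ : A k n) ^ p = 0 := by
  classical
  haveI := Fact.mk hp
  have h1 : (lf Finset.univ : A k n) = mk0 (∑ j : Fin n, X j) := by
    rw [map_sum]; rfl
  rw [h1, ← map_pow, sum_pow_char]
  have h2 : ∀ j : Fin n, (X j : MvPolynomial (Fin n) k) ^ p ∈ sqIdeal k n := by
    intro j
    have : (X j : MvPolynomial (Fin n) k) ^ p = X j ^ 2 * X j ^ (p - 2) := by
      rw [← pow_add]
      congr 1
      have := hp.two_le
      omega
    rw [this]
    exact Ideal.mul_mem_right _ _ (sq_mem_sqIdeal j)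
  have h3 : (∑ j : Fin n, (X j : MvPolynomial (Fin n) k) ^ p) ∈ sqIdeal k n :=
    Submodule.sum_mem _ fun j _ => h2 j
  rw [mk0, Ideal.Quotient.mkₐ_eq_mk, Ideal.Quotient.eq_zero_iff_mem]
  exact h3

lemma monomial_mem_sqIdeal {d : Fin n →₀ ℕ} {j : Fin n} (hj : 2 ≤ d j) (c : k) :
    monomial d c ∈ sqIdeal k n := by
  classical
  have : monomial d c = X j ^ 2 * monomial (d - Finsupp.single j 2) c := by
    have harg : (Finsupp.single j 2) + (d - Finsupp.single j 2) = d := by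
      ext x
      by_cases hx : j = x
      · subst hx
        simp only [Finsupp.add_apply, Finsupp.tsub_apply, Finsupp.single_eq_same]
        omega
      · simp only [Finsupp.add_apply, Finsupp.tsub_apply, Finsupp.single_eq_of_ne' hx]
        omega
    rw [X_pow_eq_monomial, monomial_mul, one_mul, harg]
  rw [this]
  exact Ideal.mul_mem_right _ _ (sq_mem_sqIdeal j)

lemma sqComp_eq_P (i : ℕ) : sqComp k n i = P k Finset.univ i := by
  classical
  apply le_antisymm
  · rintro x ⟨f, hf, rfl⟩
    rw [SetLike.mem_coe, MvPolynomial.mem_homogeneousSubmodule] at hf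
    have : (f.support.sum fun d => monomial d (coeff d f)) = f := support_sum_monomial_coeff f
    rw [AlgHom.toLinearMap_apply, ← show _ = f from this, map_sum]
    apply Submodule.sum_mem
    intro d hd
    by_cases hsf : ∀ x, d x ≤ 1
    · have hde : e d.support = d := by
        ext x
        rw [e_apply]
        by_cases hx : x ∈ d.support
        · rw [if_pos hx]
          have h1 := Finsupp.mem_support_iff.mp hx
          have h2 := hsf x
          omega
        · rw [if_neg hx]
          exact (Finsupp.notMem_support_iff.mp hx).symm
      have hmono : monomial d (coeff d f) = coeff d f • (∏ j ∈ d.support, X j : MvPolynomial (Fin n) k) := by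
        rw [prod_X_eq_monomial, hde, smul_monomial, smul_eq_mul, mul_one]
      rw [hmono, map_smul]
      apply Submodule.smul_mem
      apply m_mem_P (Finset.subset_univ _)
      have hdeg : Finsupp.degree d = i := by
        rw [Finsupp.degree_eq_weight_one]
        exact hf (Finsupp.mem_support_iff.mp hd)
      rw [← hdeg, Finsupp.degree]
      apply Finset.card_eq_sum_ones d.support |>.trans
      apply Finset.sum_congr rfl
      intro x hx
      have h1 := Finsupp.mem_support_iff.mp hx
      have h2 := hsf x
      omega
    · push_neg at hsf
      obtain ⟨j, hj⟩ := hsf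
      have : (Ideal.Quotient.mkₐ k (sqIdeal k n)) (monomial d (coeff d f)) = 0 := by
        rw [Ideal.Quotient.mkₐ_eq_mk, Ideal.Quotient.eq_zero_iff_mem]
        exact monomial_mem_sqIdeal (j := j) (by omega) _
      rw [this]
      exact Submodule.zero_mem _
  · rw [P, Submodule.span_le]
    rintro x ⟨S, ⟨_, hc⟩, rfl⟩
    refine ⟨∏ j ∈ S, X j, ?_, rfl⟩
    rw [SetLike.mem_coe, MvPolynomial.mem_homogeneousSubmodule, ← hc]
    have : ∀ j ∈ S, (X j : MvPolynomial (Fin n) k).IsHomogeneous 1 :=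
      fun j _ => isHomogeneous_X k j
    have := MvPolynomial.IsHomogeneous.prod S (fun j => X j) (fun _ => 1) this
    simpa using this

end SF4

namespace SF5
open MvPolynomial Finset SF SF2 SF3 SF4

variable {k : Type} [Field k] {n : ℕ}

lemma natCast_mul_eq_smul (mq : ℕ) (z : A k n) :
    ((mq : ℕ) : A k n) * z = ((mq : ℕ) : k) • z := by
  rw [Nat.cast_smul_eq_nsmul, nsmul_eq_mul]

lemma cancel_natCast {p : ℕ} (hp : p.Prime) [CharP k p] {mq : ℕ} (h1 : 0 < mq) (h2 : mq < p)
    {z : A k n} (h : ((mq : ℕ) : A k n) * z = 0) : z = 0 := by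
  rw [natCast_mul_eq_smul] at h
  have hne : ((mq : ℕ) : k) ≠ 0 := by
    rw [Ne, CharP.cast_eq_zero_iff k p]
    intro hd
    exact absurd (Nat.le_of_dvd h1 hd) (by omega)
  rcases smul_eq_zero.mp h with h' | h'
  · exact absurd h' hne
  · exact h'

lemma xv_mul_mem_P {a : Fin n} {U' : Finset (Fin n)} (ha : a ∉ U') {i : ℕ} {g : A k n}
    (hg : g ∈ P k U' i) : xv a * g ∈ P k (insert a U') (i + 1) := by
  induction hg using Submodule.span_induction with
  | mem x hx =>
    obtain ⟨S, ⟨hS, hc⟩, rfl⟩ := hx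
    rw [xv_mul_m_of_not_mem (fun hmem => ha (hS hmem))]
    exact m_mem_P (Finset.insert_subset_insert a hS)
      (by rw [Finset.card_insert_of_notMem (fun hmem => ha (hS hmem)), hc])
  | zero => rw [mul_zero]; exact Submodule.zero_mem _
  | add x y _ _ ihx ihy => rw [mul_add]; exact Submodule.add_mem _ ihx ihy
  | smul c x _ ihx => rw [mul_smul_comm]; exact Submodule.smul_mem _ _ ihx

lemma expand {a : Fin n} {U' : Finset (Fin n)} (ha : a ∉ U') (t' : ℕ) (f g : A k n) :
    lf (insert a U') ^ (t' + 1) * (f + xv a * g)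
      = lf U' ^ (t' + 1) * f
        + xv a * (((t' + 1 : ℕ) : A k n) * (lf U' ^ t' * f) + lf U' ^ (t' + 1) * g) := by
  rw [lf_insert ha, pow_split (sq_xv a)]
  linear_combination (((t' + 1 : ℕ) : A k n) * (lf U' ^ t') * g) * (sq_xv (k := k) a)

/-- key injectivity induction -/
lemma inj_lemma {p : ℕ} (hp : p.Prime) [CharP k p] (U : Finset (Fin n)) :
    ∀ i t : ℕ, i + t < p → 2 * i + t ≤ U.card →
      ∀ v ∈ P k U i, (lf U ^ t : A k n) * v = 0 → v = 0 := by
  classical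
  induction U using Finset.induction_on with
  | empty =>
    intro i t hpt hc v hv hlv
    rw [Finset.card_empty] at hc
    have ht : t = 0 := by omega
    rw [ht, pow_zero, one_mul] at hlv
    exact hlv
  | @insert a U' ha ih =>
    intro i t hpt hc v hv hlv
    rcases Nat.eq_zero_or_pos t with ht0 | htpos
    · rw [ht0, pow_zero, one_mul] at hlv; exact hlv
    obtain ⟨t', rfl⟩ : ∃ t', t = t' + 1 := ⟨t - 1, by omega⟩
    rw [Finset.card_insert_of_notMem ha] at hc
    obtain ⟨f, g, hf, hg, hveq, hflag⟩ := decomp ha hv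
    rw [hveq, expand ha] at hlv
    have hXmem : lf U' ^ (t' + 1) * f ∈ P k U' (i + (t' + 1)) := lf_pow_mul_mem_P _ hf
    have hYmem : ((t' + 1 : ℕ) : A k n) * (lf U' ^ t' * f) + lf U' ^ (t' + 1) * g
        ∈ P k U' (i + t') := by
      apply Submodule.add_mem
      · rw [natCast_mul_eq_smul]
        exact Submodule.smul_mem _ _ (lf_pow_mul_mem_P _ hf)
      · by_cases hi : i = 0
        · rw [hflag hi, mul_zero]; exact Submodule.zero_mem _
        · have := lf_pow_mul_mem_P (t' + 1) hg
          rwa [show i - 1 + (t' + 1) = i + t' by omega] at this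
    obtain ⟨hX, hY⟩ := direct ha hXmem hYmem hlv
    by_cases hb : 2 * i + (t' + 1) ≤ U'.card
    · -- non-boundary
      have hf0 : f = 0 := ih i (t' + 1) hpt hb f hf hX
      have hg0 : g = 0 := by
        by_cases hi : i = 0
        · exact hflag hi
        · rw [hf0, mul_zero, mul_zero, zero_add] at hY
          exact ih (i - 1) (t' + 1) (by omega) (by omega) g hg hY
      rw [hveq, hf0, hg0, mul_zero, add_zero]
    · -- boundary : U'.card = 2i + t'
      have hbd : U'.card = 2 * i + t' := by omega
      have hg0 : g = 0 := by
        by_cases hi : i = 0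
        · exact hflag hi
        · apply ih (i - 1) (t' + 2) (by omega) (by omega) g hg
          have hmul := congrArg (fun z => lf U' * z) hY
          simp only [mul_zero] at hmul
          have : lf U' ^ (t' + 2) * g
              = lf U' * (((t' + 1 : ℕ) : A k n) * (lf U' ^ t' * f) + lf U' ^ (t' + 1) * g)
                - ((t' + 1 : ℕ) : A k n) * (lf U' ^ (t' + 1) * f) := by ring
          rw [this, hmul, hX, mul_zero, sub_zero]
      have hf0 : f = 0 := by
        rw [hg0, mul_zero, add_zero] at hY
        have hY' : lf U' ^ t' * f = 0 := cancel_natCast hp (by omega) (by omega) hY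
        exact ih i t' (by omega) (by omega) f hf hY'
      rw [hveq, hf0, hg0, mul_zero, add_zero]

end SF5

namespace SF6
open MvPolynomial Finset SF SF2 SF3 SF4 SF5

variable {k : Type} [Field k] {n : ℕ}

lemma smul_eq_alg_mul (c : k) (z : A k n) : c • z = algebraMap k (A k n) c * z :=
  Algebra.smul_def c z

lemma natCast_eq_alg (mq : ℕ) :
    ((mq : ℕ) : A k n) = algebraMap k (A k n) ((mq : ℕ) : k) :=
  (map_natCast (algebraMap k (A k n)) mq).symm

/-- key surjectivity induction -/
lemma surj_lemma {p : ℕ} (hp : p.Prime) [CharP k p] (U : Finset (Fin n)) :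
    ∀ i t : ℕ, U.card ≤ 2 * i + t → U.card - i < p →
      ∀ w ∈ P k U (i + t), ∃ v ∈ P k U i, (lf U ^ t : A k n) * v = w := by
  classical
  induction U using Finset.induction_on with
  | empty =>
    intro i t hc hpi w hw
    rcases Nat.eq_zero_or_pos (i + t) with h0 | hpos
    · obtain ⟨hi, ht⟩ : i = 0 ∧ t = 0 := by omega
      subst hi; subst ht
      exact ⟨w, hw, by rw [pow_zero, one_mul]⟩
    · have hw0 : w = 0 := by
        have hbot : P k (∅ : Finset (Fin n)) (i + t) = ⊥ := P_eq_bot (by simpa using hpos)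
        rw [hbot] at hw
        simpa using hw
      exact ⟨0, Submodule.zero_mem _, by rw [mul_zero, hw0]⟩
  | @insert a U' ha ih =>
    intro i t hc hpi w hw
    rcases Nat.eq_zero_or_pos t with ht0 | htpos
    · subst ht0
      rw [add_zero] at hw
      exact ⟨w, hw, by rw [pow_zero, one_mul]⟩
    obtain ⟨t', rfl⟩ : ∃ t', t = t' + 1 := ⟨t - 1, by omega⟩
    rw [Finset.card_insert_of_notMem ha] at hc hpi
    obtain ⟨h, q, hh, hq, hweq, _⟩ := decomp ha hw
    rw [show i + (t' + 1) - 1 = i + t' by omega] at hq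
    have hUsub : U' ⊆ insert a U' := Finset.subset_insert a U'
    by_cases hbd : U'.card = 2 * i + t'
    · -- boundary case
      have hcast : ((t' + 1 : ℕ) : k) ≠ 0 := by
        rw [Ne, CharP.cast_eq_zero_iff k p]
        intro hd
        have := Nat.le_of_dvd (by omega) hd
        omega
      set uC : A k n := algebraMap k (A k n) (((t' + 1 : ℕ) : k))⁻¹ with huCdef
      have huC : uC * ((t' + 1 : ℕ) : A k n) = 1 := by
        rw [natCast_eq_alg, huCdef, ← map_mul, inv_mul_cancel₀ hcast, map_one]
      obtain ⟨F, hFP, hFeq⟩ := ih i t' (by omega) (by omega) q hq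
      by_cases hi : i = 0
      · subst hi
        have hbot : P k U' (0 + (t' + 1)) = ⊥ := P_eq_bot (by omega)
        have hh0 : h = 0 := by rw [hbot] at hh; simpa using hh
        have hF1 : (lf U' ^ (t' + 1) : A k n) * (uC * F) ∈ P k U' (0 + (t' + 1)) := by
          apply lf_pow_mul_mem_P
          rw [huCdef, ← smul_eq_alg_mul]
          exact Submodule.smul_mem _ _ hFP
        have hF10 : (lf U' ^ (t' + 1) : A k n) * (uC * F) = 0 := by
          rw [hbot] at hF1; simpa using hF1
        refine ⟨uC * F, ?_, ?_⟩
        · rw [huCdef, ← smul_eq_alg_mul]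
          exact (P_mono_left hUsub) (Submodule.smul_mem _ _ hFP)
        · have hexp := expand ha t' (uC * F) 0
          rw [mul_zero, add_zero] at hexp
          rw [hexp, hweq, hh0, hF10, mul_zero, add_zero, zero_add]
          congr 1
          linear_combination (xv a * q) * huC + (xv a * ((t' + 1 : ℕ) : A k n) * uC) * hFeq
      · have htarget : h - lf U' ^ (t' + 1) * (uC * F) ∈ P k U' (i - 1 + (t' + 2)) := by
          rw [show i - 1 + (t' + 2) = i + (t' + 1) by omega]
          apply Submodule.sub_mem _ hh
          apply lf_pow_mul_mem_P
          rw [huCdef, ← smul_eq_alg_mul]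
          exact Submodule.smul_mem _ _ hFP
        obtain ⟨G, hGP, hGeq⟩ := ih (i - 1) (t' + 2) (by omega) (by omega)
          (h - lf U' ^ (t' + 1) * (uC * F)) htarget
        refine ⟨(uC * F + lf U' * G) + xv a * (-(((t' + 1 : ℕ) : A k n)) * G), ?_, ?_⟩
        · apply Submodule.add_mem
          · apply (P_mono_left hUsub)
            apply Submodule.add_mem
            · rw [huCdef, ← smul_eq_alg_mul]
              exact Submodule.smul_mem _ _ hFP
            · have := lf_mul_mem_P hGP
              rwa [show i - 1 + 1 = i by omega] at this
          · have hGmem : (-(((t' + 1 : ℕ) : A k n))) * G ∈ P k U' (i - 1) := by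
              have hng : (-(((t' + 1 : ℕ) : A k n))) * G
                  = -(((t' + 1 : ℕ) : A k n) * G) := by ring
              rw [hng, natCast_mul_eq_smul, ← neg_smul]
              exact Submodule.smul_mem _ _ hGP
            have := xv_mul_mem_P ha hGmem
            rwa [show i - 1 + 1 = i by omega] at this
        · have hexp := expand ha t' (uC * F + lf U' * G) (-(((t' + 1 : ℕ) : A k n)) * G)
          rw [hexp, hweq]
          congr 1
          · linear_combination hGeq
          · linear_combination (xv a * ((t' + 1 : ℕ) : A k n) * uC) * hFeq
              + (xv a * q) * huC
    · -- non-boundary case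
      obtain ⟨f0, hf0P, hFeq⟩ := ih i (t' + 1) (by omega) (by omega) h hh
      have hq'mem : q - ((t' + 1 : ℕ) : A k n) * (lf U' ^ t' * f0) ∈ P k U' (i + t') := by
        apply Submodule.sub_mem _ hq
        rw [natCast_mul_eq_smul]
        exact Submodule.smul_mem _ _ (lf_pow_mul_mem_P _ hf0P)
      by_cases hi : i = 0
      · subst hi
        have hq'0 : q - ((t' + 1 : ℕ) : A k n) * (lf U' ^ t' * f0) = 0 := by
          have hbot : P k U' (0 + t') = ⊥ := P_eq_bot (by omega)
          rw [hbot] at hq'mem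
          simpa using hq'mem
        refine ⟨f0, (P_mono_left hUsub) hf0P, ?_⟩
        have hexp := expand ha t' f0 0
        rw [mul_zero, add_zero] at hexp
        rw [hexp, hweq, hFeq]
        congr 1
        rw [mul_zero, add_zero]
        congr 1
        linear_combination -hq'0
      · obtain ⟨g0, hg0P, hGeq⟩ := ih (i - 1) (t' + 1) (by omega) (by omega)
          (q - ((t' + 1 : ℕ) : A k n) * (lf U' ^ t' * f0))
          (by rwa [show i - 1 + (t' + 1) = i + t' by omega])
        refine ⟨f0 + xv a * g0, ?_, ?_⟩
        · apply Submodule.add_mem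
          · exact (P_mono_left hUsub) hf0P
          · have := xv_mul_mem_P ha hg0P
            rwa [show i - 1 + 1 = i by omega] at this
        · rw [expand ha, hweq, hFeq]
          congr 1
          linear_combination xv a * hGeq

end SF6

namespace SF7
open MvPolynomial Finset SF SF2 SF3 SF4 SF5 SF6

variable {k : Type} [Field k] {n : ℕ}

lemma card_univ_fin : (Finset.univ : Finset (Fin n)).card = n := by simp

lemma sqComp_eq_bot {j : ℕ} (h : n < j) : sqComp k n j = ⊥ := by
  rw [sqComp_eq_P]
  exact P_eq_bot (by rwa [card_univ_fin])

lemma keyvec_test {S T₀ : Finset (Fin n)} {r : ℕ}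
    (hT₀ : T₀ ∈ Finset.powersetCard r (Finset.univ \ S)) :
    (lf Finset.univ ^ r * m S : A k n) * m ((S ∪ T₀)ᶜ)
      = ((r.factorial : ℕ) : k) • m (Finset.univ : Finset (Fin n)) := by
  classical
  rw [lf_pow_mul_m (Finset.subset_univ S) r, smul_mul_assoc, Finset.sum_mul]
  have hsum : ∑ T ∈ Finset.powersetCard r (Finset.univ \ S),
      (m (S ∪ T) : A k n) * m ((S ∪ T₀)ᶜ) = m Finset.univ := by
    rw [Finset.sum_eq_single_of_mem T₀ hT₀ (fun T hT hne => ?_)]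
    · rw [m_mul_m_of_disjoint disjoint_compl_right, Finset.union_compl]
    · rw [Finset.mem_powersetCard] at hT hT₀
      have hnsub : ¬ T ⊆ T₀ := fun hsub =>
        hne (Finset.eq_of_subset_of_card_le hsub (by omega))
      obtain ⟨x, hxT, hxT₀⟩ := Finset.not_subset.mp hnsub
      apply m_mul_m_of_not_disjoint
      rw [Finset.not_disjoint_iff]
      refine ⟨x, Finset.mem_union_right _ hxT, Finset.mem_compl.mpr ?_⟩
      rw [Finset.mem_union]
      push_neg
      exact ⟨(Finset.mem_sdiff.mp (hT.1 hxT)).2, hxT₀⟩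
  rw [hsum, Nat.cast_smul_eq_nsmul]

lemma factorial_cast_ne_zero {p r : ℕ} (hp : p.Prime) [CharP k p] (hr : r < p) :
    ((r.factorial : ℕ) : k) ≠ 0 := by
  rw [Ne, CharP.cast_eq_zero_iff k p]
  intro hd
  have := (Nat.Prime.dvd_factorial hp).mp hd
  omega

end SF7

end

open SF SF2 SF3 SF4 SF5 SF6 SF7

/-- Let `k` be a field of prime characteristic `p`,
`A = k[x₁,…,xₙ]/(x₁²,…,xₙ²)` and `ℓ = x₁ + ⋯ + xₙ`.  For `i ≥ 0`, `t ≥ 1`, the map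
`·ℓ^t : A_i → A_{i+t}` has full rank iff `i + t > n` or `p > min{i+t, n-i}`. -/
theorem statement_5 {k : Type} [Field k] (p : ℕ) (hp : p.Prime) [CharP k p]
    (n : ℕ) (i t : ℕ) (ht : 1 ≤ t) :
    MulFullRank (sqComp k n i) (sqComp k n (i + t)) (sqSumVars k n ^ t) ↔
      (n < i + t ∨ min (i + t) (n - i) < p) := by
  classical
  have hp2 := hp.two_le
  have hsq : sqSumVars k n = lf Finset.univ := lf_univ_eq.symm
  constructor
  · intro hfr
    by_contra hcond
    push_neg at hcond
    obtain ⟨hn, hmin⟩ := hcond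
    have hpit : p ≤ i + t := le_trans hmin (min_le_left _ _)
    have hpni : p ≤ n - i := le_trans hmin (min_le_right _ _)
    rcases hfr with hinj | hsurj
    · -- contradict injectivity
      by_cases hpt : p ≤ t
      · -- ℓ^t = 0
        obtain ⟨S, hSsub, hScard⟩ :=
          Finset.exists_subset_card_eq (s := (Finset.univ : Finset (Fin n))) (n := i)
            (by rw [card_univ_fin]; omega)
        have hker : sqSumVars k n ^ t * m S = 0 := by
          rw [hsq, show t = p + (t - p) by omega, pow_add, lf_pow_p hp, zero_mul, zero_mul]
        exact m_ne_zero S (hinj (m S)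
          (by rw [sqComp_eq_P]; exact m_mem_P hSsub hScard) hker)
      · -- t < p ≤ i + t
        push_neg at hpt
        obtain ⟨S, hSsub, hScard⟩ :=
          Finset.exists_subset_card_eq (s := (Finset.univ : Finset (Fin n))) (n := (i + t - p))
            (by rw [card_univ_fin]; omega)
        set v : A k n := lf Finset.univ ^ (p - t) * m S with hvdef
        have hvmem : v ∈ P k Finset.univ i := by
          have := lf_pow_mul_mem_P (p - t) (m_mem_P (k := k) hSsub hScard)
          rwa [show i + t - p + (p - t) = i by omega] at this
        have hker : sqSumVars k n ^ t * v = 0 := by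
          rw [hsq, hvdef, ← mul_assoc, ← pow_add, show t + (p - t) = p by omega,
            lf_pow_p hp, zero_mul]
        have hv0 : v = 0 := hinj v (by rw [sqComp_eq_P]; exact hvmem) hker
        -- but v ≠ 0
        obtain ⟨T₀, hT₀sub, hT₀card⟩ :=
          Finset.exists_subset_card_eq (s := (Finset.univ \ S)) (n := (p - t))
            (by rw [Finset.card_sdiff_of_subset (Finset.subset_univ S), card_univ_fin, hScard]; omega)
        have hT₀ : T₀ ∈ Finset.powersetCard (p - t) (Finset.univ \ S) :=
          Finset.mem_powersetCard.mpr ⟨hT₀sub, hT₀card⟩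
        have htest := keyvec_test (k := k) hT₀
        rw [← hvdef, hv0, zero_mul] at htest
        rcases smul_eq_zero.mp htest.symm with hc | hm
        · exact factorial_cast_ne_zero hp (by omega) hc
        · exact m_ne_zero _ hm
    · -- contradict surjectivity
      by_cases hpt : p ≤ t
      · obtain ⟨W, hWsub, hWcard⟩ :=
          Finset.exists_subset_card_eq (s := (Finset.univ : Finset (Fin n))) (n := (i + t))
            (by rw [card_univ_fin]; omega)
        obtain ⟨v, _, hveq⟩ := hsurj (m W)
          (by rw [sqComp_eq_P]; exact m_mem_P hWsub hWcard)
        rw [hsq, show t = p + (t - p) by omega, pow_add, lf_pow_p hp, zero_mul,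
          zero_mul] at hveq
        exact m_ne_zero W hveq.symm
      · push_neg at hpt
        obtain ⟨S, hSsub, hScard⟩ :=
          Finset.exists_subset_card_eq (s := (Finset.univ : Finset (Fin n))) (n := (n - i - p))
            (by rw [card_univ_fin]; omega)
        obtain ⟨T₀, hT₀sub, hT₀card⟩ :=
          Finset.exists_subset_card_eq (s := (Finset.univ \ S)) (n := (p - t))
            (by rw [Finset.card_sdiff_of_subset (Finset.subset_univ S), card_univ_fin, hScard]; omega)
        have hT₀ : T₀ ∈ Finset.powersetCard (p - t) (Finset.univ \ S) :=
          Finset.mem_powersetCard.mpr ⟨hT₀sub, hT₀card⟩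
        have hdisj : Disjoint S T₀ :=
          Finset.disjoint_left.mpr fun x hxS hxT =>
            (Finset.mem_sdiff.mp (hT₀sub hxT)).2 hxS
        have hUcard : ((S ∪ T₀)ᶜ : Finset (Fin n)).card = i + t := by
          rw [Finset.card_compl, Finset.card_union_of_disjoint hdisj, hScard, hT₀card,
            Fintype.card_fin]
          omega
        obtain ⟨v, _, hveq⟩ := hsurj (m ((S ∪ T₀)ᶜ))
          (by rw [sqComp_eq_P]; exact m_mem_P (Finset.subset_univ _) hUcard)
        -- multiply both sides by u := lf^(p-t) * m S
        have hu : (sqSumVars k n ^ t * v) * (lf Finset.univ ^ (p - t) * m S : A k n) = 0 := by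
          rw [hsq]
          have hpow : (lf Finset.univ : A k n) ^ t * lf Finset.univ ^ (p - t)
              = lf Finset.univ ^ p := by
            rw [← pow_add]; congr 1; omega
          have : (lf Finset.univ ^ t * v) * (lf Finset.univ ^ (p - t) * m S : A k n)
              = (lf Finset.univ ^ p * (m S)) * v := by
            rw [← hpow]; ring
          rw [this, lf_pow_p hp, zero_mul, zero_mul]
        rw [hveq] at hu
        have htest := keyvec_test (k := k) hT₀
        rw [show (m ((S ∪ T₀)ᶜ) : A k n) * (lf Finset.univ ^ (p - t) * m S)
            = (lf Finset.univ ^ (p - t) * m S : A k n) * m ((S ∪ T₀)ᶜ) from mul_comm _ _,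
          htest] at hu
        rcases smul_eq_zero.mp hu with hc | hm
        · exact factorial_cast_ne_zero hp (by omega) hc
        · exact m_ne_zero _ hm
  · intro hcond
    rcases hcond with hlt | hmin
    · right
      intro w hw
      rw [sqComp_eq_bot hlt] at hw
      refine ⟨0, Submodule.zero_mem _, ?_⟩
      rw [mul_zero]
      simpa using hw.symm
    · by_cases hcase : i + t ≤ n - i
      · left
        have hit : i + t < p := by
          have := min_eq_left hcase
          omega
        intro v hv hveq
        apply inj_lemma hp Finset.univ i t hit (by rw [card_univ_fin]; omega) v
          (by rwa [sqComp_eq_P] at hv)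
        rwa [hsq] at hveq
      · right
        intro w hw
        have hni : n - i < p := by
          have : min (i + t) (n - i) = n - i := min_eq_right (by omega)
          omega
        obtain ⟨v, hvP, hveq⟩ := surj_lemma hp Finset.univ i t
          (by rw [card_univ_fin]; omega) (by rw [card_univ_fin]; omega) w
          (by rwa [sqComp_eq_P] at hw)
        exact ⟨v, by rwa [sqComp_eq_P], by rwa [hsq]⟩
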